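/- For every strictly increasing function f : ℕ → ℕ and all (a_k) ∈ c₀₀, ‖Σ_k a_k e_{f(k)}‖_{T̈} ≥ ‖Σ_k a_k e_k‖_{T̈}, where (e_n) is the unit vector basis. -/

import Mathlib

open Ordinal Filter Topology

namespace LTIndex

/-- `E < F` for finite sets: `max E < min F` (with `max ∅ = 0`, `min ∅ = ∞`),
equivalently every element of `E` is less than every element of `F`. -/
def finLT (E F : Finset ℕ) : Prop := ∀ a ∈ E, ∀ b ∈ F, a < b

/-- `min E` (junk value `0` when `E = ∅`). -/
noncomputable def minOf (E : Finset ℕ) : ℕ := sInf (E : Set ℕ)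

/-- `{E₁, …, E_n}` is `𝓕`-admissible: the `Eᵢ` are nonempty, `E₁ < ⋯ < E_n`
and `{min E₁, …, min E_n} ∈ 𝓕`. -/
def IsAdmissible (𝓕 : Set (Finset ℕ)) (l : List (Finset ℕ)) : Prop :=
  (∀ E ∈ l, E.Nonempty) ∧ l.Chain' finLT ∧ (l.map minOf).toFinset ∈ 𝓕

/-- `𝓜[𝓝]`. -/
def famComp (M N : Set (Finset ℕ)) : Set (Finset ℕ) :=
  {F | ∃ l : List (Finset ℕ), IsAdmissible M l ∧ (∀ E ∈ l, E ∈ N) ∧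
    F = l.foldr (· ∪ ·) ∅}

/-- `(𝓜, 𝓝) = {M ∪ N : M < N, M ∈ 𝓜, N ∈ 𝓝}`. -/
def pairFam (M N : Set (Finset ℕ)) : Set (Finset ℕ) :=
  {F | ∃ A ∈ M, ∃ B ∈ N, finLT A B ∧ F = A ∪ B}

/-- `𝓜² = (𝓜, 𝓜)`. -/
def sqFam (M : Set (Finset ℕ)) : Set (Finset ℕ) := pairFam M M

/-- `S₀ = {{n} : n ∈ ℕ} ∪ {∅}`. -/
def schreierZero : Set (Finset ℕ) := {F : Finset ℕ | F.card ≤ 1}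

/-- `S₁ = {F : |F| ≤ min F}`. -/
noncomputable def schreierOne : Set (Finset ℕ) := {F : Finset ℕ | F.card ≤ minOf F}

/-- A ladder system: for every countable limit ordinal `o`, `seq o` is a strictly
increasing sequence of ordinals below `o` with supremum `o`. -/
def IsCtblLadder (seq : Ordinal.{0} → ℕ → Ordinal.{0}) : Prop :=
  ∀ o : Ordinal, o.card ≤ Cardinal.aleph0 → Order.IsSuccLimit o →
    StrictMono (seq o) ∧ (∀ n : ℕ, seq o n < o) ∧ (⨆ n : ℕ, seq o n) = o

/-- The Schreier classes `S_α`, relative to a choice `seq` of ladders at limit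
ordinals: `S₀` is the singletons together with `∅`, `S_{α+1} = S₁[S_α]`, and at a
limit `α` (with ladder `(α_n) = seq α`), `S_α = {F : F ∈ S_{α_n} for some n ≤ |F|}`. -/
noncomputable def schreier (seq : Ordinal.{0} → ℕ → Ordinal.{0}) (o : Ordinal.{0}) :
    Set (Finset ℕ) :=
  Ordinal.limitRecOn (motive := fun _ => Set (Finset ℕ)) o schreierZero
    (fun _ S => famComp schreierOne S)
    (fun o _ ih => {F | ∃ n : ℕ, n ≤ F.card ∧ ∃ h : seq o n < o, F ∈ ih (seq o n) h})

/-- `σ_F(x) = ∑_{n ∈ F} |x n|`. -/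
noncomputable def sigmaF (F : Finset ℕ) (x : ℕ →₀ ℝ) : ℝ := ∑ n ∈ F, |x n|

/-- `‖x‖_𝓕 = sup_{F ∈ 𝓕} σ_F(x)`. -/
noncomputable def famNorm (𝓕 : Set (Finset ℕ)) (x : ℕ →₀ ℝ) : ℝ :=
  sSup {r : ℝ | ∃ F ∈ 𝓕, r = sigmaF F x}

/-- `E x`: the coordinate restriction of `x` to `E`. -/
noncomputable def restr (E : Finset ℕ) (x : ℕ →₀ ℝ) : ℕ →₀ ℝ :=
  Finsupp.filter (· ∈ E) x

/-- The norms `‖·‖_n` (when `Sadm = S_β`), resp. `‖·‖′_n` (when `Sadm = (S_β)²`):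
`‖·‖₀ = ‖·‖_{S_α}` and
`‖x‖_{n+1} = max{‖x‖_n, sup{(1/2)∑ᵢ ‖Eᵢx‖_n : {E₁,…,E_j} Sadm-admissible}}`. -/
noncomputable def normSeq (Sa Sadm : Set (Finset ℕ)) : ℕ → (ℕ →₀ ℝ) → ℝ
  | 0, x => famNorm Sa x
  | n + 1, x =>
      max (normSeq Sa Sadm n x)
        (sSup {r : ℝ | ∃ l : List (Finset ℕ), IsAdmissible Sadm l ∧
          r = (1 / 2) * ((l.map fun E => normSeq Sa Sadm n (restr E x)).sum)})

/-- `‖x‖_{T̃}` (resp. `‖x‖_{T̈}`): the limit (= supremum, the sequence being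
nondecreasing) of the norms `‖x‖_n` (resp. `‖x‖′_n`). -/
noncomputable def tnorm (Sa Sadm : Set (Finset ℕ)) (x : ℕ →₀ ℝ) : ℝ :=
  ⨆ n : ℕ, normSeq Sa Sadm n x

/-- The families `𝓕_n` (with `Sadm = S_β`), resp. `𝓕′_n` (with `Sadm = (S_β)²`):
`𝓕₀ = S_α`, `𝓕_{n+1} = Sadm[𝓕_n]`. -/
def famF (Sa Sadm : Set (Finset ℕ)) : ℕ → Set (Finset ℕ)
  | 0 => Sa
  | n + 1 => famComp Sadm (famF Sa Sadm n)

/-- The families `𝓖_n` (with `Sadm = S_β`), resp. `𝓖′_n` (with `Sadm = (S_β)²`),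
reindexed: `famG Sadm n = 𝓖_{n+1}`, i.e. `famG Sadm 0 = 𝓖₁ = Sadm` and
`𝓖_{n+2} = Sadm[𝓖_{n+1}]`. -/
def famG (Sadm : Set (Finset ℕ)) : ℕ → Set (Finset ℕ)
  | 0 => Sadm
  | n + 1 => famComp Sadm (famG Sadm n)

/-- Hereditary family. -/
def Hereditary (𝓕 : Set (Finset ℕ)) : Prop := ∀ A ∈ 𝓕, ∀ B ⊆ A, B ∈ 𝓕

/-- Spreading family. -/
def Spreading (𝓕 : Set (Finset ℕ)) : Prop :=
  ∀ A ∈ 𝓕, ∀ g : ℕ → ℕ, StrictMonoOn g (A : Set ℕ) → (∀ a ∈ A, a ≤ g a) →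
    A.image g ∈ 𝓕

/-- Compactness of a family of finite sets, viewed inside `2^ℕ` (ℕ → Bool with the
product topology) via characteristic functions. -/
def CompactFam (𝓕 : Set (Finset ℕ)) : Prop :=
  IsCompact ((fun A : Finset ℕ => fun n : ℕ => decide (n ∈ A)) '' 𝓕)

/-- Regular family: hereditary, spreading and compact. -/
def RegularFam (𝓕 : Set (Finset ℕ)) : Prop :=
  Hereditary 𝓕 ∧ Spreading 𝓕 ∧ CompactFam 𝓕

/-- The Cantor–Bendixson derivative of a family of finite subsets of ℕ: the set of
its limit points in the product topology of `2^ℕ` (a basic neighbourhood of `A` is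
determined by an agreement of initial segments). -/
def famDeriv (𝓕 : Set (Finset ℕ)) : Set (Finset ℕ) :=
  {A | ∀ m : ℕ, ∃ B ∈ 𝓕, B ≠ A ∧ B.filter (· ≤ m) = A.filter (· ≤ m)}

/-- Iterated Cantor–Bendixson derivatives `𝓕^{(o)}`. -/
noncomputable def famDerivIter (𝓕 : Set (Finset ℕ)) (o : Ordinal.{0}) : Set (Finset ℕ) :=
  Ordinal.limitRecOn (motive := fun _ => Set (Finset ℕ)) o 𝓕
    (fun _ S => famDeriv S)
    (fun o _ ih => ⋂ (o' : Ordinal) (h : o' < o), ih o' h)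

/-- One step of the standard representation: `A` is obtained from the remainder `R`
as `R ∩ [1, k]` where `k` is the largest element of `F` with `R ∩ [1, k] ∈ 𝓝`. -/
def stepOf (N : Set (Finset ℕ)) (F R A : Finset ℕ) : Prop :=
  ∃ k ∈ F, A = R.filter (· ≤ k) ∧ A ∈ N ∧
    ∀ k' ∈ F, R.filter (· ≤ k') ∈ N → k' ≤ k

/-- `IsStdRepFrom N F R L`: starting from remainder `R`, the list `L` is produced by
the greedy recursion defining the standard representation, exhausting `R`. -/
def IsStdRepFrom (N : Set (Finset ℕ)) (F : Finset ℕ) : Finset ℕ → List (Finset ℕ) → Prop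
  | R, [] => R = ∅
  | R, A :: L => stepOf N F R A ∧ IsStdRepFrom N F (R \ A) L

/-- `L` is the standard representation of `F` (as an element of `𝓜[𝓝]`). -/
def IsStdRep (N : Set (Finset ℕ)) (F : Finset ℕ) (L : List (Finset ℕ)) : Prop :=
  IsStdRepFrom N F F L

section Trees

variable {X : Type*}

/-- A tree on `X`: a set of nonempty finite sequences closed under nonempty initial
segments. -/
def IsTree (T : Set (List X)) : Prop :=
  ∀ l ∈ T, l ≠ [] ∧ ∀ m : ℕ, 0 < m → m < l.length → l.take m ∈ T

/-- A tree is well-founded if it has no infinite branch. -/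
def WellFoundedTree (T : Set (List X)) : Prop :=
  ¬ ∃ f : ℕ → X, ∀ n : ℕ, (List.ofFn fun i : Fin (n + 1) => f i) ∈ T

/-- The derived tree `D(T)`. -/
def treeDeriv (T : Set (List X)) : Set (List X) :=
  {l | l ∈ T ∧ ∃ x : X, l ++ [x] ∈ T}

/-- Iterated derived trees `D^o(T)`. -/
noncomputable def treeDerivIter (T : Set (List X)) (o : Ordinal.{0}) : Set (List X) :=
  Ordinal.limitRecOn (motive := fun _ => Set (List X)) o T
    (fun _ S => treeDeriv S)
    (fun o _ ih => ⋂ (o' : Ordinal) (h : o' < o), ih o' h)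

/-- The order `o(T)` of a (well-founded) tree. -/
noncomputable def treeOrder (T : Set (List X)) : Ordinal.{0} :=
  sInf {o : Ordinal | treeDerivIter T o = ∅}

end Trees

section Banach

variable (X : Type) [NormedAddCommGroup X] [NormedSpace ℝ X]

/-- `cs` witnesses that the node `l` is a finite block basis of `(e_i)`: each entry
of `l` is the (finite, nonzero) linear combination of the `e_i` given by the
corresponding entry of `cs`, and the supports are successive. -/
def IsBlockNode (e : ℕ → X) (l : List X) (cs : List (ℕ →₀ ℝ)) : Prop :=
  cs.length = l.length ∧
  (∀ (i : ℕ) (h : i < cs.length) (h' : i < l.length),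
    l.get ⟨i, h'⟩ = (cs.get ⟨i, h⟩).sum fun n r => r • e n) ∧
  (∀ c ∈ cs, c ≠ 0) ∧
  cs.Chain' fun c d => finLT c.support d.support

/-- `e` is a (Schauder) basis of `X`. -/
def IsSchauderBasis (e : ℕ → X) : Prop :=
  ∀ x : X, ∃! a : ℕ → ℝ,
    Tendsto (fun n => ∑ i ∈ Finset.range n, a i • e i) atTop (𝓝 x)

/-- An `ℓ¹`-`K` tree on `X`: a tree on the unit sphere of `X` such that every node
`(x₁, …, x_n)` satisfies `‖∑ aᵢ xᵢ‖ ≥ K⁻¹ ∑ |aᵢ|`. -/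
def IsL1Tree (K : ℝ) (T : Set (List X)) : Prop :=
  IsTree T ∧ ∀ l ∈ T, (∀ x ∈ l, ‖x‖ = 1) ∧
    ∀ a : Fin l.length → ℝ, K⁻¹ * ∑ i, |a i| ≤ ‖∑ i : Fin l.length, a i • l.get i‖

/-- `I(X, K)`: the supremum of the orders of well-founded `ℓ¹`-`K` trees on `X`. -/
noncomputable def bourgainIndexK (K : ℝ) : Ordinal.{0} :=
  ⨆ T : {T : Set (List X) // IsL1Tree X K T ∧ WellFoundedTree T}, treeOrder T.1

/-- The Bourgain `ℓ¹`-index `I(X) = sup_{1 ≤ K < ∞} I(X, K)`. -/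
noncomputable def bourgainIndex : Ordinal.{0} :=
  ⨆ K : {K : ℝ // 1 ≤ K}, bourgainIndexK X K.1

/-- `I_b(X, K)` relative to the basis `e`: the supremum of the orders of
well-founded `ℓ¹`-`K` block trees on `X`. -/
noncomputable def blockIndexK (e : ℕ → X) (K : ℝ) : Ordinal.{0} :=
  ⨆ T : {T : Set (List X) //
      IsL1Tree X K T ∧ (∀ l ∈ T, ∃ cs, IsBlockNode X e l cs) ∧ WellFoundedTree T},
    treeOrder T.1

/-- The block `ℓ¹`-index `I_b(X) = sup_{1 ≤ K < ∞} I_b(X, K)`. -/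
noncomputable def blockIndex (e : ℕ → X) : Ordinal.{0} :=
  ⨆ K : {K : ℝ // 1 ≤ K}, blockIndexK X e K.1

end Banach

section Proof15

open Finset in
lemma finLT_disjoint {E F : Finset ℕ} (h : finLT E F) : Disjoint E F :=
  Finset.disjoint_left.mpr fun {a} ha haF => lt_irrefl a (h a ha a haF)

lemma finLT_trans {E F G : Finset ℕ} (hF : F.Nonempty) (h1 : finLT E F)
    (h2 : finLT F G) : finLT E G := by
  obtain ⟨m, hm⟩ := hF
  exact fun a ha b hb => lt_trans (h1 a ha m hm) (h2 m hm b hb)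

lemma chain_forall_finLT : ∀ {l : List (Finset ℕ)} {a : Finset ℕ},
    List.Chain finLT a l → (∀ E ∈ l, E.Nonempty) → ∀ b ∈ l, finLT a b := by
  intro l
  induction l with
  | nil => intro a _ _ b hb; exact absurd hb List.not_mem_nil
  | cons c t ih =>
    intro a hc hne b hb
    have hc : finLT a c ∧ List.Chain finLT c t := List.isChain_cons_cons.mp hc
    rcases List.mem_cons.mp hb with rfl | hb
    · exact hc.1
    · exact finLT_trans (hne c List.mem_cons_self) hc.1
        (ih hc.2 (fun E hE => hne E (List.mem_cons_of_mem _ hE)) b hb)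

lemma chain'_pairwise_finLT : ∀ {l : List (Finset ℕ)},
    l.Chain' finLT → (∀ E ∈ l, E.Nonempty) → l.Pairwise finLT := by
  intro l
  induction l with
  | nil => intro _ _; exact List.Pairwise.nil
  | cons a t ih =>
    intro hc hne
    have hct : List.Chain finLT a t := hc
    refine List.Pairwise.cons ?_ (ih hc.tail fun E hE => hne E (List.mem_cons_of_mem _ hE))
    exact chain_forall_finLT hct (fun E hE => hne E (List.mem_cons_of_mem _ hE))

lemma admissible_pairwise_disjoint {M : Set (Finset ℕ)} {l : List (Finset ℕ)}
    (h : IsAdmissible M l) : l.Pairwise (fun E F => Disjoint E F) :=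
  (chain'_pairwise_finLT h.2.1 h.1).imp finLT_disjoint

/-- ℓ¹ mass of a finitely supported sequence. -/
noncomputable def Lval (x : ℕ →₀ ℝ) : ℝ := ∑ i ∈ x.support, |x i|

lemma Lval_nonneg (x : ℕ →₀ ℝ) : 0 ≤ Lval x :=
  Finset.sum_nonneg fun _ _ => abs_nonneg _

lemma Lval_filter (p : ℕ → Prop) [DecidablePred p] (x : ℕ →₀ ℝ) :
    Lval (Finsupp.filter p x) = ∑ i ∈ x.support.filter p, |x i| := by
  classical
  unfold Lval
  rw [Finsupp.support_filter]
  refine Finset.sum_congr rfl fun i hi => ?_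
  rw [Finsupp.filter_apply_pos]
  exact (Finset.mem_filter.mp hi).2

lemma Lval_split (E : Finset ℕ) (x : ℕ →₀ ℝ) :
    Lval (restr E x) + Lval (Finsupp.filter (fun i => i ∉ E) x) = Lval x := by
  classical
  unfold restr
  rw [Lval_filter, Lval_filter]
  exact Finset.sum_filter_add_sum_filter_not _ _ _

lemma restr_filter_of_disjoint {E F : Finset ℕ} (h : Disjoint E F) (x : ℕ →₀ ℝ) :
    restr F (Finsupp.filter (fun i => i ∉ E) x) = restr F x := by
  classical
  ext m
  unfold restr
  rw [Finsupp.filter_apply, Finsupp.filter_apply, Finsupp.filter_apply]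
  by_cases hm : m ∈ F
  · rw [if_pos hm, if_pos hm, if_pos (Finset.disjoint_right.mp h hm)]
  · rw [if_neg hm, if_neg hm]

lemma sum_Lval_restr_le : ∀ (l : List (Finset ℕ)) (x : ℕ →₀ ℝ),
    l.Pairwise (fun E F => Disjoint E F) →
    (l.map fun E => Lval (restr E x)).sum ≤ Lval x := by
  intro l
  induction l with
  | nil => intro x _; simpa using Lval_nonneg x
  | cons E t ih =>
    intro x hp
    rw [List.pairwise_cons] at hp
    rw [List.map_cons, List.sum_cons]
    have h1 : (t.map fun F => Lval (restr F x)).sum =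
        (t.map fun F => Lval (restr F (Finsupp.filter (fun i => i ∉ E) x))).sum := by
      congr 1
      refine List.map_congr_left fun F hF => ?_
      rw [restr_filter_of_disjoint (hp.1 F hF) x]
    rw [h1]
    have h2 := ih (Finsupp.filter (fun i => i ∉ E) x) hp.2
    have h3 := Lval_split E x
    linarith

lemma sigmaF_le_Lval (F : Finset ℕ) (x : ℕ →₀ ℝ) : sigmaF F x ≤ Lval x := by
  classical
  unfold sigmaF Lval
  rw [← Finset.sum_filter_of_ne (p := fun i => i ∈ x.support)
    (fun i _ h => Finsupp.mem_support_iff.mpr fun h0 => h (by rw [h0, abs_zero]))]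
  refine Finset.sum_le_sum_of_subset_of_nonneg ?_ (fun i _ _ => abs_nonneg _)
  intro i hi
  exact (Finset.mem_filter.mp hi).2

lemma list_sum_map_le {α : Type*} (g h : α → ℝ) :
    ∀ l : List α, (∀ a ∈ l, g a ≤ h a) → (l.map g).sum ≤ (l.map h).sum := by
  intro l
  induction l with
  | nil => intro _; simp
  | cons a t ih =>
    intro hle
    simp only [List.map_cons, List.sum_cons]
    exact add_le_add (hle a List.mem_cons_self)
      (ih fun b hb => hle b (List.mem_cons_of_mem _ hb))

lemma normSeq_le_Lval (Sa Sadm : Set (Finset ℕ)) :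
    ∀ (n : ℕ) (x : ℕ →₀ ℝ), normSeq Sa Sadm n x ≤ Lval x := by
  intro n
  induction n with
  | zero =>
    intro x
    refine Real.sSup_le ?_ (Lval_nonneg x)
    rintro r ⟨F, _, rfl⟩
    exact sigmaF_le_Lval F x
  | succ n ih =>
    intro x
    refine max_le (ih x) (Real.sSup_le ?_ (Lval_nonneg x))
    rintro r ⟨l, hadm, rfl⟩
    have h1 : (l.map fun E => normSeq Sa Sadm n (restr E x)).sum ≤
        (l.map fun E => Lval (restr E x)).sum :=
      list_sum_map_le _ _ l fun E _ => ih (restr E x)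
    have h2 : (l.map fun E => Lval (restr E x)).sum ≤ Lval x :=
      sum_Lval_restr_le l x (admissible_pairwise_disjoint hadm)
    have h3 := Lval_nonneg x
    linarith

lemma minOf_image {f : ℕ → ℕ} (hf : StrictMono f) {E : Finset ℕ} (hE : E.Nonempty) :
    minOf (E.image f) = f (minOf E) := by
  unfold minOf
  apply le_antisymm
  · apply Nat.sInf_le
    have h1 : sInf (E : Set ℕ) ∈ (E : Set ℕ) :=
      Nat.sInf_mem (Finset.coe_nonempty.mpr hE)
    exact_mod_cast Finset.mem_coe.mpr (Finset.mem_image_of_mem f h1)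
  · have hne : ((E.image f : Finset ℕ) : Set ℕ).Nonempty :=
      Finset.coe_nonempty.mpr (hE.image f)
    refine le_csInf hne fun b hb => ?_
    obtain ⟨a, ha, rfl⟩ := Finset.mem_image.mp (Finset.mem_coe.mp hb)
    exact hf.monotone (Nat.sInf_le (Finset.mem_coe.mpr ha))

lemma bddAbove_famNorm_set (Sa : Set (Finset ℕ)) (x : ℕ →₀ ℝ) :
    BddAbove {r : ℝ | ∃ F ∈ Sa, r = sigmaF F x} :=
  ⟨Lval x, by rintro r ⟨F, _, rfl⟩; exact sigmaF_le_Lval F x⟩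

lemma bddAbove_normSeq_set (Sa Sadm : Set (Finset ℕ)) (n : ℕ) (x : ℕ →₀ ℝ) :
    BddAbove {r : ℝ | ∃ l : List (Finset ℕ), IsAdmissible Sadm l ∧
      r = (1 / 2) * ((l.map fun E => normSeq Sa Sadm n (restr E x)).sum)} := by
  refine ⟨Lval x, ?_⟩
  rintro r ⟨l, hadm, rfl⟩
  have h1 : (l.map fun E => normSeq Sa Sadm n (restr E x)).sum ≤
      (l.map fun E => Lval (restr E x)).sum :=
    list_sum_map_le _ _ l fun E _ => normSeq_le_Lval Sa Sadm n (restr E x)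
  have h2 : (l.map fun E => Lval (restr E x)).sum ≤ Lval x :=
    sum_Lval_restr_le l x (admissible_pairwise_disjoint hadm)
  have := Lval_nonneg x
  linarith

end Proof15
section Proof15b

lemma toFinset_map_nat (g : ℕ → ℕ) : ∀ l : List ℕ,
    (l.map g).toFinset = l.toFinset.image g := by
  intro l
  induction l with
  | nil => simp
  | cons a t ih => simp [ih, Finset.image_insert]

lemma foldr_union_image (f : ℕ → ℕ) : ∀ l : List (Finset ℕ),
    (l.map (Finset.image f)).foldr (· ∪ ·) ∅ = (l.foldr (· ∪ ·) ∅).image f := by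
  intro l
  induction l with
  | nil => simp
  | cons a t ih => simp [ih, Finset.image_union]

lemma finLT_image {f : ℕ → ℕ} (hf : StrictMono f) {A B : Finset ℕ} (h : finLT A B) :
    finLT (A.image f) (B.image f) := by
  intro a ha b hb
  obtain ⟨a', ha', rfl⟩ := Finset.mem_image.mp ha
  obtain ⟨b', hb', rfl⟩ := Finset.mem_image.mp hb
  exact hf (h a' ha' b' hb')

lemma isAdmissible_image {M : Set (Finset ℕ)} {f : ℕ → ℕ} (hf : StrictMono f)
    (hM : ∀ F ∈ M, F.image f ∈ M) {l : List (Finset ℕ)} (h : IsAdmissible M l) :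
    IsAdmissible M (l.map (Finset.image f)) := by
  obtain ⟨h1, h2, h3⟩ := h
  refine ⟨?_, ?_, ?_⟩
  · intro E hE
    obtain ⟨F, hF, rfl⟩ := List.mem_map.mp hE
    exact (h1 F hF).image f
  · refine (List.isChain_map _).mpr ?_
    exact List.IsChain.imp (fun A B hAB => finLT_image hf hAB) h2
  · have e1 : (l.map (Finset.image f)).map minOf = (l.map minOf).map f := by
      rw [List.map_map, List.map_map]
      refine List.map_congr_left fun E hE => ?_
      simp only [Function.comp_apply]
      exact minOf_image hf (h1 E hE)
    rw [e1, toFinset_map_nat]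
    exact hM _ h3

lemma schreierOne_image {f : ℕ → ℕ} (hf : StrictMono f) {F : Finset ℕ}
    (hF : F ∈ schreierOne) : F.image f ∈ schreierOne := by
  rcases F.eq_empty_or_nonempty with rfl | hne
  · show (Finset.image f ∅).card ≤ minOf (Finset.image f ∅)
    simp
  · show (F.image f).card ≤ minOf (F.image f)
    rw [minOf_image hf hne]
    calc (F.image f).card ≤ F.card := Finset.card_image_le
      _ ≤ minOf F := hF
      _ ≤ f (minOf F) := hf.le_apply

lemma schreier_zero (seq : Ordinal → ℕ → Ordinal) :
    schreier seq 0 = schreierZero := by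
  unfold schreier
  exact Ordinal.limitRecOn_zero _ _ _

lemma schreier_succ (seq : Ordinal → ℕ → Ordinal) (o : Ordinal) :
    schreier seq (Order.succ o) = famComp schreierOne (schreier seq o) := by
  unfold schreier
  exact Ordinal.limitRecOn_succ _ _ _ _

lemma schreier_limit (seq : Ordinal → ℕ → Ordinal) {o : Ordinal} (h : Order.IsSuccLimit o) :
    schreier seq o = {F | ∃ n : ℕ, n ≤ F.card ∧ ∃ h' : seq o n < o,
      F ∈ schreier seq (seq o n)} := by
  unfold schreier
  rw [Ordinal.limitRecOn_limit _ _ _ _ h]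

lemma schreier_image (seq : Ordinal → ℕ → Ordinal) {f : ℕ → ℕ} (hf : StrictMono f) :
    ∀ o : Ordinal, o.card ≤ Cardinal.aleph0 →
      ∀ F ∈ schreier seq o, F.image f ∈ schreier seq o := by
  intro o
  induction o using Ordinal.limitRecOn with
  | zero =>
    intro _ F hF
    rw [schreier_zero] at hF ⊢
    exact le_trans Finset.card_image_le hF
  | add_one o ih =>
    intro hcard F hF
    rw [Ordinal.add_one_eq_succ] at hcard hF ⊢
    rw [schreier_succ] at hF ⊢
    have hcard' : o.card ≤ Cardinal.aleph0 :=
      le_trans (Ordinal.card_le_card (Order.le_succ o)) hcard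
    obtain ⟨l, hadm, hmem, rfl⟩ := hF
    refine ⟨l.map (Finset.image f),
      isAdmissible_image hf (fun G hG => schreierOne_image hf hG) hadm, ?_,
      (foldr_union_image f l).symm⟩
    intro E hE
    obtain ⟨G, hG, rfl⟩ := List.mem_map.mp hE
    exact ih hcard' G (hmem G hG)
  | limit o hlim ih =>
    intro hcard F hF
    rw [schreier_limit _ hlim] at hF ⊢
    obtain ⟨n, hn, hlt, hmem⟩ := hF
    refine ⟨n, ?_, hlt, ih _ hlt ((Ordinal.card_le_card hlt.le).trans hcard) F hmem⟩
    rwa [Finset.card_image_of_injective F hf.injective]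

lemma empty_mem_schreierOne : (∅ : Finset ℕ) ∈ schreierOne := by
  show (∅ : Finset ℕ).card ≤ minOf ∅
  simp

lemma isAdmissible_nil (M : Set (Finset ℕ)) (h : (∅ : Finset ℕ) ∈ M) :
    IsAdmissible M [] := by
  refine ⟨by simp, List.isChain_nil, ?_⟩
  simpa using h

lemma empty_mem_schreier (seq : Ordinal → ℕ → Ordinal) (hseq : IsCtblLadder seq) :
    ∀ o : Ordinal, o.card ≤ Cardinal.aleph0 → (∅ : Finset ℕ) ∈ schreier seq o := by
  intro o
  induction o using Ordinal.limitRecOn with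
  | zero =>
    intro _
    rw [schreier_zero]
    show (∅ : Finset ℕ).card ≤ 1
    simp
  | add_one o ih =>
    intro hcard
    rw [Ordinal.add_one_eq_succ]
    rw [schreier_succ]
    exact ⟨[], isAdmissible_nil _ empty_mem_schreierOne, by simp, rfl⟩
  | limit o hlim ih =>
    intro hcard
    rw [schreier_limit _ hlim]
    have h0 := (hseq o hcard hlim).2.1 0
    exact ⟨0, Nat.zero_le _, h0, ih _ h0 ((Ordinal.card_le_card h0.le).trans hcard)⟩

lemma sqFam_image {S : Set (Finset ℕ)} {f : ℕ → ℕ} (hf : StrictMono f)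
    (hS : ∀ F ∈ S, F.image f ∈ S) :
    ∀ F ∈ sqFam S, F.image f ∈ sqFam S := by
  rintro F ⟨A, hA, B, hB, hAB, rfl⟩
  exact ⟨A.image f, hS A hA, B.image f, hS B hB, finLT_image hf hAB,
    by rw [Finset.image_union]⟩

lemma empty_mem_sqFam {S : Set (Finset ℕ)} (h : (∅ : Finset ℕ) ∈ S) :
    (∅ : Finset ℕ) ∈ sqFam S :=
  ⟨∅, h, ∅, h, by intro a ha; exact absurd ha (Finset.notMem_empty a), by simp⟩

lemma restr_image_embDomain {f : ℕ → ℕ} (hf : Function.Injective f)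
    (E : Finset ℕ) (x : ℕ →₀ ℝ) :
    restr (E.image f) (Finsupp.embDomain ⟨f, hf⟩ x) =
      Finsupp.embDomain ⟨f, hf⟩ (restr E x) := by
  classical
  ext m
  by_cases hm : ∃ n, f n = m
  · obtain ⟨n, rfl⟩ := hm
    have he : f n = (⟨f, hf⟩ : ℕ ↪ ℕ) n := rfl
    rw [he, Finsupp.embDomain_apply_self]
    unfold restr
    rw [Finsupp.filter_apply, Finsupp.filter_apply, Finsupp.embDomain_apply_self]
    by_cases hn : n ∈ E
    · rw [if_pos hn, if_pos (by rw [← he]; exact Finset.mem_image_of_mem f hn)]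
    · rw [if_neg hn, if_neg (fun hc => hn ?_)]
      obtain ⟨a, ha, hfa⟩ := Finset.mem_image.mp hc
      rwa [← hf hfa]
  · have hm' : m ∉ Set.range (⟨f, hf⟩ : ℕ ↪ ℕ) := by
      simpa using fun n h => hm ⟨n, h⟩
    have h1 : Finsupp.embDomain ⟨f, hf⟩ x m = 0 :=
      Finsupp.embDomain_notin_range _ _ _ hm'
    have h2 : Finsupp.embDomain ⟨f, hf⟩ (restr E x) m = 0 :=
      Finsupp.embDomain_notin_range _ _ _ hm'
    rw [h2]
    show (restr (E.image f) (Finsupp.embDomain ⟨f, hf⟩ x)) m = 0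
    unfold restr
    rw [Finsupp.filter_apply, h1, ite_self]

lemma sigmaF_image {f : ℕ → ℕ} (hf : Function.Injective f) (F : Finset ℕ)
    (x : ℕ →₀ ℝ) :
    sigmaF (F.image f) (Finsupp.embDomain ⟨f, hf⟩ x) = sigmaF F x := by
  unfold sigmaF
  rw [Finset.sum_image (fun a _ b _ h => hf h)]
  refine Finset.sum_congr rfl fun n _ => ?_
  rw [show f n = (⟨f, hf⟩ : ℕ ↪ ℕ) n from rfl, Finsupp.embDomain_apply_self]

end Proof15b
section Proof15c

lemma normSeq_mono_spread (Sa Sadm : Set (Finset ℕ)) {f : ℕ → ℕ} (hf : StrictMono f)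
    (hSa : ∀ F ∈ Sa, F.image f ∈ Sa) (hSadm : ∀ F ∈ Sadm, F.image f ∈ Sadm)
    (hSa0 : (∅ : Finset ℕ) ∈ Sa) (hSadm0 : (∅ : Finset ℕ) ∈ Sadm) :
    ∀ (n : ℕ) (x : ℕ →₀ ℝ), normSeq Sa Sadm n x ≤
      normSeq Sa Sadm n (Finsupp.embDomain ⟨f, hf.injective⟩ x) := by
  intro n
  induction n with
  | zero =>
    intro x
    show famNorm Sa x ≤ famNorm Sa (Finsupp.embDomain ⟨f, hf.injective⟩ x)
    have bdd := bddAbove_famNorm_set Sa (Finsupp.embDomain ⟨f, hf.injective⟩ x)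
    have hnn : (0 : ℝ) ≤ famNorm Sa (Finsupp.embDomain ⟨f, hf.injective⟩ x) := by
      refine le_csSup bdd ⟨∅, hSa0, ?_⟩
      simp [sigmaF]
    refine Real.sSup_le ?_ hnn
    rintro r ⟨F, hF, rfl⟩
    calc sigmaF F x
        = sigmaF (F.image f) (Finsupp.embDomain ⟨f, hf.injective⟩ x) :=
          (sigmaF_image hf.injective F x).symm
      _ ≤ famNorm Sa (Finsupp.embDomain ⟨f, hf.injective⟩ x) :=
          le_csSup bdd ⟨F.image f, hSa F hF, rfl⟩
  | succ n ih =>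
    intro x
    show max _ _ ≤ max _ _
    refine max_le ((ih x).trans (le_max_left _ _)) (le_trans ?_ (le_max_right _ _))
    have bdd := bddAbove_normSeq_set Sa Sadm n (Finsupp.embDomain ⟨f, hf.injective⟩ x)
    have hnn : (0 : ℝ) ≤ sSup {r : ℝ | ∃ l : List (Finset ℕ), IsAdmissible Sadm l ∧
        r = (1 / 2) * ((l.map fun E => normSeq Sa Sadm n
          (restr E (Finsupp.embDomain ⟨f, hf.injective⟩ x))).sum)} := by
      refine le_csSup bdd ⟨[], isAdmissible_nil _ hSadm0, ?_⟩
      simp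
    refine Real.sSup_le ?_ hnn
    rintro r ⟨l, hadm, rfl⟩
    refine le_trans ?_ (le_csSup bdd ⟨l.map (Finset.image f),
      isAdmissible_image hf hSadm hadm, rfl⟩)
    rw [List.map_map]
    refine mul_le_mul_of_nonneg_left ?_ (by norm_num)
    refine list_sum_map_le _ _ l fun E _ => ?_
    show normSeq Sa Sadm n (restr E x) ≤
      normSeq Sa Sadm n (restr (E.image f) (Finsupp.embDomain ⟨f, hf.injective⟩ x))
    rw [restr_image_embDomain hf.injective E x]
    exact ih (restr E x)

end Proof15c

/-- for a strictly increasing `f : ℕ → ℕ` and `(a_k) ∈ c₀₀`,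
`‖∑ a_k e_{f(k)}‖_{T̈} ≥ ‖∑ a_k e_k‖_{T̈}`. -/
theorem statement15 (seq : Ordinal → ℕ → Ordinal) (hseq : IsCtblLadder seq)
    (a b : Ordinal) (ha : a.card ≤ Cardinal.aleph0) (hb : b.card ≤ Cardinal.aleph0)
    (hb0 : b ≠ 0) (f : ℕ → ℕ) (hf : StrictMono f) (c : ℕ →₀ ℝ) :
    tnorm (schreier seq a) (sqFam (schreier seq b)) c ≤
      tnorm (schreier seq a) (sqFam (schreier seq b))
        (Finsupp.embDomain ⟨f, hf.injective⟩ c) := by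
  have key : ∀ n : ℕ, normSeq (schreier seq a) (sqFam (schreier seq b)) n c ≤
      normSeq (schreier seq a) (sqFam (schreier seq b)) n
        (Finsupp.embDomain ⟨f, hf.injective⟩ c) :=
    fun n => normSeq_mono_spread _ _ hf
      (schreier_image seq hf a ha)
      (sqFam_image hf (schreier_image seq hf b hb))
      (empty_mem_schreier seq hseq a ha)
      (empty_mem_sqFam (empty_mem_schreier seq hseq b hb)) n c
  have bddy : BddAbove (Set.range fun n =>
      normSeq (schreier seq a) (sqFam (schreier seq b)) n
        (Finsupp.embDomain ⟨f, hf.injective⟩ c)) := by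
    refine ⟨Lval (Finsupp.embDomain ⟨f, hf.injective⟩ c), ?_⟩
    rintro r ⟨n, rfl⟩
    exact normSeq_le_Lval _ _ n _
  exact ciSup_le fun n => (key n).trans (le_ciSup bddy n)

end LTIndex
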